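/- Canonicity for sums: for every closed well-typed term ⊢ t : A₁ + A₂, the configuration ⟨⟦t⟧ | α⟩ reduces to a normal configuration of the form ⟨inj₁ u | α⟩ or ⟨inj₂ u | α⟩ for some term u. -/

import Mathlib

mutual
/-- μμ̃ machine terms. -/
inductive MTm where
  | var : Nat → MTm
  | mu : MMach → MTm            -- μα.m, binds co-variable 0
  | muPair : MMach → MTm        -- μ(x·α).m, binds variable 0 and co-variable 0
  | injl : MTm → MTm
  | injr : MTm → MTm
/-- μμ̃ machine co-terms (contexts). -/
inductive MCo where
  | covar : Nat → MCo
  | cons : MTm → MCo → MCo      -- t·e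
  | mutilde : MMach → MCo       -- μ̃x.m, binds variable 0
  | case : MMach → MMach → MCo  -- μ̃[inj₁x₁.m₁ | inj₂x₂.m₂], each branch binds variable 0
/-- μμ̃ machine configurations ⟨t | e⟩. -/
inductive MMach where
  | conf : MTm → MCo → MMach
end

/-- Lift a renaming under a binder. -/
def liftN (f : Nat → Nat) : Nat → Nat
  | 0 => 0
  | n + 1 => f n + 1

mutual
/-- Simultaneous renaming of variables (ft) and co-variables (fc). -/
def MTm.rename (ft fc : Nat → Nat) : MTm → MTm
  | .var n => .var (ft n)
  | .mu m => .mu (MMach.rename ft (liftN fc) m)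
  | .muPair m => .muPair (MMach.rename (liftN ft) (liftN fc) m)
  | .injl t => .injl (MTm.rename ft fc t)
  | .injr t => .injr (MTm.rename ft fc t)
def MCo.rename (ft fc : Nat → Nat) : MCo → MCo
  | .covar n => .covar (fc n)
  | .cons t e => .cons (MTm.rename ft fc t) (MCo.rename ft fc e)
  | .mutilde m => .mutilde (MMach.rename (liftN ft) fc m)
  | .case m₁ m₂ => .case (MMach.rename (liftN ft) fc m₁) (MMach.rename (liftN ft) fc m₂)
def MMach.rename (ft fc : Nat → Nat) : MMach → MMach
  | .conf t e => .conf (MTm.rename ft fc t) (MCo.rename ft fc e)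
end

/-- Lift a substitution under a variable binder. -/
def upT (σt : Nat → MTm) (σc : Nat → MCo) : (Nat → MTm) × (Nat → MCo) :=
  (fun n => match n with
    | 0 => .var 0
    | n + 1 => MTm.rename Nat.succ id (σt n),
   fun n => MCo.rename Nat.succ id (σc n))

/-- Lift a substitution under a co-variable binder. -/
def upC (σt : Nat → MTm) (σc : Nat → MCo) : (Nat → MTm) × (Nat → MCo) :=
  (fun n => MTm.rename id Nat.succ (σt n),
   fun n => match n with
    | 0 => .covar 0
    | n + 1 => MCo.rename id Nat.succ (σc n))

mutual
/-- Simultaneous substitution of terms for variables and co-terms for co-variables. -/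
def MTm.subst (σt : Nat → MTm) (σc : Nat → MCo) : MTm → MTm
  | .var n => σt n
  | .mu m => .mu (MMach.subst (upC σt σc).1 (upC σt σc).2 m)
  | .muPair m =>
      .muPair (MMach.subst (upT (upC σt σc).1 (upC σt σc).2).1
                           (upT (upC σt σc).1 (upC σt σc).2).2 m)
  | .injl t => .injl (MTm.subst σt σc t)
  | .injr t => .injr (MTm.subst σt σc t)
def MCo.subst (σt : Nat → MTm) (σc : Nat → MCo) : MCo → MCo
  | .covar n => σc n
  | .cons t e => .cons (MTm.subst σt σc t) (MCo.subst σt σc e)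
  | .mutilde m => .mutilde (MMach.subst (upT σt σc).1 (upT σt σc).2 m)
  | .case m₁ m₂ => .case (MMach.subst (upT σt σc).1 (upT σt σc).2 m₁)
                         (MMach.subst (upT σt σc).1 (upT σt σc).2 m₂)
def MMach.subst (σt : Nat → MTm) (σc : Nat → MCo) : MMach → MMach
  | .conf t e => .conf (MTm.subst σt σc t) (MCo.subst σt σc e)
end

/-- m[e/α] : substitute co-term `e` for co-variable 0. -/
def MMach.substCo (m : MMach) (e : MCo) : MMach :=
  MMach.subst MTm.var (fun n => match n with | 0 => e | n + 1 => .covar n) m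

/-- m[t/x] : substitute term `t` for variable 0. -/
def MMach.substTm (m : MMach) (t : MTm) : MMach :=
  MMach.subst (fun n => match n with | 0 => t | n + 1 => .var n) MCo.covar m

/-- m[t/x, e/α] : substitute both a term and a co-term. -/
def MMach.substTmCo (m : MMach) (t : MTm) (e : MCo) : MMach :=
  MMach.subst (fun n => match n with | 0 => t | n + 1 => .var n)
              (fun n => match n with | 0 => e | n + 1 => .covar n) m

mutual
/-- Reduction of μμ̃ terms (congruence). -/
inductive StepT : MTm → MTm → Prop
  | mu {m m'} : StepM m m' → StepT (.mu m) (.mu m')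
  | muPair {m m'} : StepM m m' → StepT (.muPair m) (.muPair m')
  | injl {t t'} : StepT t t' → StepT (.injl t) (.injl t')
  | injr {t t'} : StepT t t' → StepT (.injr t) (.injr t')
/-- Reduction of μμ̃ co-terms (congruence). -/
inductive StepC : MCo → MCo → Prop
  | consl {t t'} (e) : StepT t t' → StepC (.cons t e) (.cons t' e)
  | consr (t) {e e'} : StepC e e' → StepC (.cons t e) (.cons t e')
  | mutilde {m m'} : StepM m m' → StepC (.mutilde m) (.mutilde m')
  | casel {m₁ m₁'} (m₂) : StepM m₁ m₁' → StepC (.case m₁ m₂) (.case m₁' m₂)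
  | caser (m₁) {m₂ m₂'} : StepM m₂ m₂' → StepC (.case m₁ m₂) (.case m₁ m₂')
/-- Reduction of μμ̃ machine configurations. -/
inductive StepM : MMach → MMach → Prop
  | mu (m : MMach) (e : MCo) : StepM (.conf (.mu m) e) (m.substCo e)
  | mutilde (t : MTm) (m : MMach) : StepM (.conf t (.mutilde m)) (m.substTm t)
  | muPair (m : MMach) (u : MTm) (e : MCo) :
      StepM (.conf (.muPair m) (.cons u e)) (m.substTmCo u e)
  | casel (t : MTm) (m₁ m₂ : MMach) :
      StepM (.conf (.injl t) (.case m₁ m₂)) (m₁.substTm t)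
  | caser (t : MTm) (m₁ m₂ : MMach) :
      StepM (.conf (.injr t) (.case m₁ m₂)) (m₂.substTm t)
  | congT {t t'} (e) : StepT t t' → StepM (.conf t e) (.conf t' e)
  | congC (t) {e e'} : StepC e e' → StepM (.conf t e) (.conf t e')
end

/-- Source λ-calculus with sums (de Bruijn). In `case t u₁ u₂` each branch binds
variable 0. -/
inductive LTm where
  | var : Nat → LTm
  | lam : LTm → LTm
  | app : LTm → LTm → LTm
  | injl : LTm → LTm
  | injr : LTm → LTm
  | case : LTm → LTm → LTm → LTm

/-- Compilation of λ-terms with sums into the μμ̃ machine (call-by-name). -/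
def transl : LTm → MTm
  | .var n => .var n
  | .lam t => .muPair (.conf (transl t) (.covar 0))
  | .app t u => .mu (.conf (transl t) (.cons (transl u) (.covar 0)))
  | .injl t => .injl (transl t)
  | .injr t => .injr (transl t)
  | .case t u₁ u₂ =>
      .mu (.conf (transl t)
        (.case (.conf (transl u₁) (.covar 0)) (.conf (transl u₂) (.covar 0))))

/-- Simple types: a (positive) base type, function types and sum types. -/
inductive Ty where
  | base : Ty
  | arrow : Ty → Ty → Ty
  | sum : Ty → Ty → Ty

/-- Typing judgment of the simply-typed λ-calculus with sums. -/
inductive HasTy : List Ty → LTm → Ty → Prop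
  | var {Γ n A} : Γ[n]? = some A → HasTy Γ (.var n) A
  | lam {Γ t A B} : HasTy (A :: Γ) t B → HasTy Γ (.lam t) (.arrow A B)
  | app {Γ t u A B} : HasTy Γ t (.arrow A B) → HasTy Γ u A → HasTy Γ (.app t u) B
  | injl {Γ t A B} : HasTy Γ t A → HasTy Γ (.injl t) (.sum A B)
  | injr {Γ t A B} : HasTy Γ t B → HasTy Γ (.injr t) (.sum A B)
  | case {Γ t u₁ u₂ A B C} : HasTy Γ t (.sum A B) → HasTy (A :: Γ) u₁ C →
      HasTy (B :: Γ) u₂ C → HasTy Γ (.case t u₁ u₂) C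

theorem liftN_comp (f g : Nat → Nat) :
    (fun n => liftN f (liftN g n)) = liftN (fun n => f (g n)) := by
  funext n; cases n <;> rfl

theorem liftN_id : (liftN fun n => n) = fun n => n := by
  funext n; cases n <;> rfl

mutual
theorem renren_t (f g f' g' : Nat → Nat) : ∀ t : MTm,
    (t.rename f' g').rename f g = t.rename (fun n => f (f' n)) (fun n => g (g' n))
  | .var n => rfl
  | .mu m => by
      simp only [MTm.rename, renren_m f (liftN g) f' (liftN g') m, liftN_comp]
  | .muPair m => by
      simp only [MTm.rename, renren_m _ _ _ _ m, liftN_comp]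
  | .injl t => by simp only [MTm.rename, renren_t f g f' g' t]
  | .injr t => by simp only [MTm.rename, renren_t f g f' g' t]
theorem renren_c (f g f' g' : Nat → Nat) : ∀ e : MCo,
    (e.rename f' g').rename f g = e.rename (fun n => f (f' n)) (fun n => g (g' n))
  | .covar n => rfl
  | .cons t e => by
      simp only [MCo.rename, renren_t f g f' g' t, renren_c f g f' g' e]
  | .mutilde m => by
      simp only [MCo.rename, renren_m _ _ _ _ m, liftN_comp]
  | .case m₁ m₂ => by
      simp only [MCo.rename, renren_m _ _ _ _ m₁, renren_m _ _ _ _ m₂, liftN_comp]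
theorem renren_m (f g f' g' : Nat → Nat) : ∀ m : MMach,
    (m.rename f' g').rename f g = m.rename (fun n => f (f' n)) (fun n => g (g' n))
  | .conf t e => by
      simp only [MMach.rename, renren_t f g f' g' t, renren_c f g f' g' e]
end

mutual
theorem ren_id_t : ∀ t : MTm, t.rename (fun n => n) (fun n => n) = t
  | .var n => rfl
  | .mu m => by simp only [MTm.rename, liftN_id, ren_id_m m]
  | .muPair m => by simp only [MTm.rename, liftN_id, ren_id_m m]
  | .injl t => by simp only [MTm.rename, ren_id_t t]
  | .injr t => by simp only [MTm.rename, ren_id_t t]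
theorem ren_id_c : ∀ e : MCo, e.rename (fun n => n) (fun n => n) = e
  | .covar n => rfl
  | .cons t e => by simp only [MCo.rename, ren_id_t t, ren_id_c e]
  | .mutilde m => by simp only [MCo.rename, liftN_id, ren_id_m m]
  | .case m₁ m₂ => by simp only [MCo.rename, liftN_id, ren_id_m m₁, ren_id_m m₂]
theorem ren_id_m : ∀ m : MMach, m.rename (fun n => n) (fun n => n) = m
  | .conf t e => by simp only [MMach.rename, ren_id_t t, ren_id_c e]
end
mutual
theorem ren_subst_t (σt : Nat → MTm) (σc : Nat → MCo) (f g : Nat → Nat) : ∀ t : MTm,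
    (t.rename f g).subst σt σc = t.subst (fun n => σt (f n)) (fun n => σc (g n))
  | .var n => rfl
  | .mu m => by
      simp only [MTm.rename, MTm.subst, ren_subst_m _ _ _ _ m]
      have h1 : (fun n => (upC σt σc).1 (f n)) =
          (upC (fun n => σt (f n)) (fun n => σc (g n))).1 := by
        funext n; rfl
      have h2 : (fun n => (upC σt σc).2 (liftN g n)) =
          (upC (fun n => σt (f n)) (fun n => σc (g n))).2 := by
        funext n; cases n <;> rfl
      rw [h1, h2]
  | .muPair m => by
      simp only [MTm.rename, MTm.subst, ren_subst_m _ _ _ _ m]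
      have h1 : (fun n => (upT (upC σt σc).1 (upC σt σc).2).1 (liftN f n)) =
          (upT (upC (fun n => σt (f n)) (fun n => σc (g n))).1
               (upC (fun n => σt (f n)) (fun n => σc (g n))).2).1 := by
        funext n; cases n <;> rfl
      have h2 : (fun n => (upT (upC σt σc).1 (upC σt σc).2).2 (liftN g n)) =
          (upT (upC (fun n => σt (f n)) (fun n => σc (g n))).1
               (upC (fun n => σt (f n)) (fun n => σc (g n))).2).2 := by
        funext n; cases n <;> rfl
      rw [h1, h2]
  | .injl t => by simp only [MTm.rename, MTm.subst, ren_subst_t _ _ _ _ t]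
  | .injr t => by simp only [MTm.rename, MTm.subst, ren_subst_t _ _ _ _ t]
theorem ren_subst_c (σt : Nat → MTm) (σc : Nat → MCo) (f g : Nat → Nat) : ∀ e : MCo,
    (e.rename f g).subst σt σc = e.subst (fun n => σt (f n)) (fun n => σc (g n))
  | .covar n => rfl
  | .cons t e => by
      simp only [MCo.rename, MCo.subst, ren_subst_t _ _ _ _ t, ren_subst_c _ _ _ _ e]
  | .mutilde m => by
      simp only [MCo.rename, MCo.subst, ren_subst_m _ _ _ _ m]
      have h1 : (fun n => (upT σt σc).1 (liftN f n)) =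
          (upT (fun n => σt (f n)) (fun n => σc (g n))).1 := by
        funext n; cases n <;> rfl
      have h2 : (fun n => (upT σt σc).2 (g n)) =
          (upT (fun n => σt (f n)) (fun n => σc (g n))).2 := by
        funext n; rfl
      rw [h1, h2]
  | .case m₁ m₂ => by
      simp only [MCo.rename, MCo.subst, ren_subst_m _ _ _ _ m₁, ren_subst_m _ _ _ _ m₂]
      have h1 : (fun n => (upT σt σc).1 (liftN f n)) =
          (upT (fun n => σt (f n)) (fun n => σc (g n))).1 := by
        funext n; cases n <;> rfl
      have h2 : (fun n => (upT σt σc).2 (g n)) =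
          (upT (fun n => σt (f n)) (fun n => σc (g n))).2 := by
        funext n; rfl
      rw [h1, h2]
theorem ren_subst_m (σt : Nat → MTm) (σc : Nat → MCo) (f g : Nat → Nat) : ∀ m : MMach,
    (m.rename f g).subst σt σc = m.subst (fun n => σt (f n)) (fun n => σc (g n))
  | .conf t e => by
      simp only [MMach.rename, MMach.subst, ren_subst_t _ _ _ _ t, ren_subst_c _ _ _ _ e]
end
mutual
theorem subst_ren_t (σt : Nat → MTm) (σc : Nat → MCo) (f g : Nat → Nat) : ∀ t : MTm,
    (t.subst σt σc).rename f g
      = t.subst (fun n => (σt n).rename f g) (fun n => (σc n).rename f g)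
  | .var n => rfl
  | .mu m => by
      simp only [MTm.rename, MTm.subst, subst_ren_m _ _ _ _ m]
      have h1 : (fun n => ((upC σt σc).1 n).rename f (liftN g)) =
          (upC (fun n => (σt n).rename f g) (fun n => (σc n).rename f g)).1 := by
        funext n; simp only [upC, renren_t]; rfl
      have h2 : (fun n => ((upC σt σc).2 n).rename f (liftN g)) =
          (upC (fun n => (σt n).rename f g) (fun n => (σc n).rename f g)).2 := by
        funext n; cases n <;> simp only [upC, renren_c] <;> rfl
      rw [h1, h2]
  | .muPair m => by
      simp only [MTm.rename, MTm.subst, subst_ren_m _ _ _ _ m]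
      have h1 : (fun n => ((upT (upC σt σc).1 (upC σt σc).2).1 n).rename (liftN f) (liftN g)) =
          (upT (upC (fun n => (σt n).rename f g) (fun n => (σc n).rename f g)).1
               (upC (fun n => (σt n).rename f g) (fun n => (σc n).rename f g)).2).1 := by
        funext n; cases n <;> simp only [upT, upC, renren_t] <;> rfl
      have h2 : (fun n => ((upT (upC σt σc).1 (upC σt σc).2).2 n).rename (liftN f) (liftN g)) =
          (upT (upC (fun n => (σt n).rename f g) (fun n => (σc n).rename f g)).1
               (upC (fun n => (σt n).rename f g) (fun n => (σc n).rename f g)).2).2 := by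
        funext n; cases n <;> simp only [upT, upC, renren_c] <;> rfl
      rw [h1, h2]
  | .injl t => by simp only [MTm.rename, MTm.subst, subst_ren_t _ _ _ _ t]
  | .injr t => by simp only [MTm.rename, MTm.subst, subst_ren_t _ _ _ _ t]
theorem subst_ren_c (σt : Nat → MTm) (σc : Nat → MCo) (f g : Nat → Nat) : ∀ e : MCo,
    (e.subst σt σc).rename f g
      = e.subst (fun n => (σt n).rename f g) (fun n => (σc n).rename f g)
  | .covar n => rfl
  | .cons t e => by
      simp only [MCo.rename, MCo.subst, subst_ren_t _ _ _ _ t, subst_ren_c _ _ _ _ e]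
  | .mutilde m => by
      simp only [MCo.rename, MCo.subst, subst_ren_m _ _ _ _ m]
      have h1 : (fun n => ((upT σt σc).1 n).rename (liftN f) g) =
          (upT (fun n => (σt n).rename f g) (fun n => (σc n).rename f g)).1 := by
        funext n; cases n <;> simp only [upT, renren_t] <;> rfl
      have h2 : (fun n => ((upT σt σc).2 n).rename (liftN f) g) =
          (upT (fun n => (σt n).rename f g) (fun n => (σc n).rename f g)).2 := by
        funext n; simp only [upT, renren_c]; rfl
      rw [h1, h2]
  | .case m₁ m₂ => by
      simp only [MCo.rename, MCo.subst, subst_ren_m _ _ _ _ m₁, subst_ren_m _ _ _ _ m₂]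
      have h1 : (fun n => ((upT σt σc).1 n).rename (liftN f) g) =
          (upT (fun n => (σt n).rename f g) (fun n => (σc n).rename f g)).1 := by
        funext n; cases n <;> simp only [upT, renren_t] <;> rfl
      have h2 : (fun n => ((upT σt σc).2 n).rename (liftN f) g) =
          (upT (fun n => (σt n).rename f g) (fun n => (σc n).rename f g)).2 := by
        funext n; simp only [upT, renren_c]; rfl
      rw [h1, h2]
theorem subst_ren_m (σt : Nat → MTm) (σc : Nat → MCo) (f g : Nat → Nat) : ∀ m : MMach,
    (m.subst σt σc).rename f g
      = m.subst (fun n => (σt n).rename f g) (fun n => (σc n).rename f g)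
  | .conf t e => by
      simp only [MMach.rename, MMach.subst, subst_ren_t _ _ _ _ t, subst_ren_c _ _ _ _ e]
end
mutual
theorem subst_subst_t (σt τt : Nat → MTm) (σc τc : Nat → MCo) : ∀ t : MTm,
    (t.subst σt σc).subst τt τc
      = t.subst (fun n => (σt n).subst τt τc) (fun n => (σc n).subst τt τc)
  | .var n => rfl
  | .mu m => by
      simp only [MTm.subst, subst_subst_m _ _ _ _ m]
      have h1 : (fun n => ((upC σt σc).1 n).subst (upC τt τc).1 (upC τt τc).2) =
          (upC (fun n => (σt n).subst τt τc) (fun n => (σc n).subst τt τc)).1 := by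
        funext n; simp only [upC, ren_subst_t, subst_ren_t]; rfl
      have h2 : (fun n => ((upC σt σc).2 n).subst (upC τt τc).1 (upC τt τc).2) =
          (upC (fun n => (σt n).subst τt τc) (fun n => (σc n).subst τt τc)).2 := by
        funext n; cases n <;> simp only [upC, ren_subst_c, subst_ren_c] <;> rfl
      rw [h1, h2]
  | .muPair m => by
      simp only [MTm.subst, subst_subst_m _ _ _ _ m]
      have h1 : (fun n => ((upT (upC σt σc).1 (upC σt σc).2).1 n).subst
            (upT (upC τt τc).1 (upC τt τc).2).1 (upT (upC τt τc).1 (upC τt τc).2).2) =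
          (upT (upC (fun n => (σt n).subst τt τc) (fun n => (σc n).subst τt τc)).1
               (upC (fun n => (σt n).subst τt τc) (fun n => (σc n).subst τt τc)).2).1 := by
        funext n; cases n <;>
          simp only [upT, upC, ren_subst_t, subst_ren_t, renren_t, id] <;> rfl
      have h2 : (fun n => ((upT (upC σt σc).1 (upC σt σc).2).2 n).subst
            (upT (upC τt τc).1 (upC τt τc).2).1 (upT (upC τt τc).1 (upC τt τc).2).2) =
          (upT (upC (fun n => (σt n).subst τt τc) (fun n => (σc n).subst τt τc)).1
               (upC (fun n => (σt n).subst τt τc) (fun n => (σc n).subst τt τc)).2).2 := by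
        funext n; cases n <;>
          simp only [upT, upC, ren_subst_c, subst_ren_c, renren_c, id] <;> rfl
      rw [h1, h2]
  | .injl t => by simp only [MTm.subst, subst_subst_t _ _ _ _ t]
  | .injr t => by simp only [MTm.subst, subst_subst_t _ _ _ _ t]
theorem subst_subst_c (σt τt : Nat → MTm) (σc τc : Nat → MCo) : ∀ e : MCo,
    (e.subst σt σc).subst τt τc
      = e.subst (fun n => (σt n).subst τt τc) (fun n => (σc n).subst τt τc)
  | .covar n => rfl
  | .cons t e => by
      simp only [MCo.subst, subst_subst_t _ _ _ _ t, subst_subst_c _ _ _ _ e]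
  | .mutilde m => by
      simp only [MCo.subst, subst_subst_m _ _ _ _ m]
      have h1 : (fun n => ((upT σt σc).1 n).subst (upT τt τc).1 (upT τt τc).2) =
          (upT (fun n => (σt n).subst τt τc) (fun n => (σc n).subst τt τc)).1 := by
        funext n; cases n <;> simp only [upT, ren_subst_t, subst_ren_t] <;> rfl
      have h2 : (fun n => ((upT σt σc).2 n).subst (upT τt τc).1 (upT τt τc).2) =
          (upT (fun n => (σt n).subst τt τc) (fun n => (σc n).subst τt τc)).2 := by
        funext n; simp only [upT, ren_subst_c, subst_ren_c]; rfl
      rw [h1, h2]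
  | .case m₁ m₂ => by
      simp only [MCo.subst, subst_subst_m _ _ _ _ m₁, subst_subst_m _ _ _ _ m₂]
      have h1 : (fun n => ((upT σt σc).1 n).subst (upT τt τc).1 (upT τt τc).2) =
          (upT (fun n => (σt n).subst τt τc) (fun n => (σc n).subst τt τc)).1 := by
        funext n; cases n <;> simp only [upT, ren_subst_t, subst_ren_t] <;> rfl
      have h2 : (fun n => ((upT σt σc).2 n).subst (upT τt τc).1 (upT τt τc).2) =
          (upT (fun n => (σt n).subst τt τc) (fun n => (σc n).subst τt τc)).2 := by
        funext n; simp only [upT, ren_subst_c, subst_ren_c]; rfl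
      rw [h1, h2]
theorem subst_subst_m (σt τt : Nat → MTm) (σc τc : Nat → MCo) : ∀ m : MMach,
    (m.subst σt σc).subst τt τc
      = m.subst (fun n => (σt n).subst τt τc) (fun n => (σc n).subst τt τc)
  | .conf t e => by
      simp only [MMach.subst, subst_subst_t _ _ _ _ t, subst_subst_c _ _ _ _ e]
end

mutual
theorem subst_vc_t (f g : Nat → Nat) : ∀ t : MTm,
    t.subst (fun n => .var (f n)) (fun n => .covar (g n)) = t.rename f g
  | .var n => rfl
  | .mu m => by
      simp only [MTm.subst, MTm.rename]
      have h1 : (upC (fun n => MTm.var (f n)) (fun n => MCo.covar (g n))).1 =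
          fun n => MTm.var (f n) := by funext n; rfl
      have h2 : (upC (fun n => MTm.var (f n)) (fun n => MCo.covar (g n))).2 =
          fun n => MCo.covar (liftN g n) := by funext n; cases n <;> rfl
      rw [h1, h2, subst_vc_m _ _ m]
  | .muPair m => by
      simp only [MTm.subst, MTm.rename]
      have h1 : (upT (upC (fun n => MTm.var (f n)) (fun n => MCo.covar (g n))).1
            (upC (fun n => MTm.var (f n)) (fun n => MCo.covar (g n))).2).1 =
          fun n => MTm.var (liftN f n) := by funext n; cases n <;> rfl
      have h2 : (upT (upC (fun n => MTm.var (f n)) (fun n => MCo.covar (g n))).1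
            (upC (fun n => MTm.var (f n)) (fun n => MCo.covar (g n))).2).2 =
          fun n => MCo.covar (liftN g n) := by funext n; cases n <;> rfl
      rw [h1, h2, subst_vc_m _ _ m]
  | .injl t => by simp only [MTm.subst, MTm.rename, subst_vc_t _ _ t]
  | .injr t => by simp only [MTm.subst, MTm.rename, subst_vc_t _ _ t]
theorem subst_vc_c (f g : Nat → Nat) : ∀ e : MCo,
    e.subst (fun n => .var (f n)) (fun n => .covar (g n)) = e.rename f g
  | .covar n => rfl
  | .cons t e => by simp only [MCo.subst, MCo.rename, subst_vc_t _ _ t, subst_vc_c _ _ e]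
  | .mutilde m => by
      simp only [MCo.subst, MCo.rename]
      have h1 : (upT (fun n => MTm.var (f n)) (fun n => MCo.covar (g n))).1 =
          fun n => MTm.var (liftN f n) := by funext n; cases n <;> rfl
      have h2 : (upT (fun n => MTm.var (f n)) (fun n => MCo.covar (g n))).2 =
          fun n => MCo.covar (g n) := by funext n; rfl
      rw [h1, h2, subst_vc_m _ _ m]
  | .case m₁ m₂ => by
      simp only [MCo.subst, MCo.rename]
      have h1 : (upT (fun n => MTm.var (f n)) (fun n => MCo.covar (g n))).1 =
          fun n => MTm.var (liftN f n) := by funext n; cases n <;> rfl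
      have h2 : (upT (fun n => MTm.var (f n)) (fun n => MCo.covar (g n))).2 =
          fun n => MCo.covar (g n) := by funext n; rfl
      rw [h1, h2, subst_vc_m _ _ m₁, subst_vc_m _ _ m₂]
theorem subst_vc_m (f g : Nat → Nat) : ∀ m : MMach,
    m.subst (fun n => .var (f n)) (fun n => .covar (g n)) = m.rename f g
  | .conf t e => by simp only [MMach.subst, MMach.rename, subst_vc_t _ _ t, subst_vc_c _ _ e]
end

theorem subst_id_m (m : MMach) : m.subst MTm.var MCo.covar = m := by
  have : m.subst MTm.var MCo.covar
      = m.subst (fun n => .var ((fun k => k) n)) (fun n => .covar ((fun k => k) n)) := rfl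
  rw [this, subst_vc_m, ren_id_m]
def Head : MTm → MCo → Prop
  | .mu _, _ => True
  | _, .mutilde _ => True
  | .muPair _, .cons _ _ => True
  | .injl _, .case _ _ => True
  | .injr _, .case _ _ => True
  | _, _ => False

mutual
def NFt : MTm → Prop
  | .var _ => True
  | .mu m => NFm m
  | .muPair m => NFm m
  | .injl t => NFt t
  | .injr t => NFt t
def NFc : MCo → Prop
  | .covar _ => True
  | .cons t e => NFt t ∧ NFc e
  | .mutilde m => NFm m
  | .case m₁ m₂ => NFm m₁ ∧ NFm m₂
def NFm : MMach → Prop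
  | .conf t e => NFt t ∧ NFc e ∧ ¬ Head t e
end

mutual
theorem nf_no_step_t : ∀ {t t' : MTm}, StepT t t' → ¬ NFt t
  | _, _, .mu h => fun hn => nf_no_step_m h hn
  | _, _, .muPair h => fun hn => nf_no_step_m h hn
  | _, _, .injl h => fun hn => nf_no_step_t h hn
  | _, _, .injr h => fun hn => nf_no_step_t h hn
theorem nf_no_step_c : ∀ {e e' : MCo}, StepC e e' → ¬ NFc e
  | _, _, .consl _ h => fun hn => nf_no_step_t h hn.1
  | _, _, .consr _ h => fun hn => nf_no_step_c h hn.2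
  | _, _, .mutilde h => fun hn => nf_no_step_m h hn
  | _, _, .casel _ h => fun hn => nf_no_step_m h hn.1
  | _, _, .caser _ h => fun hn => nf_no_step_m h hn.2
theorem nf_no_step_m : ∀ {m m' : MMach}, StepM m m' → ¬ NFm m
  | _, _, .mu m e => fun hn => hn.2.2 (by simp [Head])
  | _, _, .mutilde t m => fun hn => hn.2.2 (by cases t <;> simp [Head])
  | _, _, .muPair m u e => fun hn => hn.2.2 (by simp [Head])
  | _, _, .casel t m₁ m₂ => fun hn => hn.2.2 (by simp [Head])
  | _, _, .caser t m₁ m₂ => fun hn => hn.2.2 (by simp [Head])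
  | _, _, .congT _ h => fun hn => nf_no_step_t h hn.1
  | _, _, .congC _ h => fun hn => nf_no_step_c h hn.2.1
end

theorem head_ren {t : MTm} {e : MCo} (f g : Nat → Nat)
    (h : Head (t.rename f g) (e.rename f g)) : Head t e := by
  cases t <;> cases e <;> simpa [Head, MTm.rename, MCo.rename] using h

mutual
theorem nf_ren_t : ∀ (t : MTm) (f g : Nat → Nat), NFt t → NFt (t.rename f g)
  | .var n, _, _ => fun h => h
  | .mu m, f, g => fun h => nf_ren_m m _ _ h
  | .muPair m, f, g => fun h => nf_ren_m m _ _ h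
  | .injl t, f, g => fun h => nf_ren_t t _ _ h
  | .injr t, f, g => fun h => nf_ren_t t _ _ h
theorem nf_ren_c : ∀ (e : MCo) (f g : Nat → Nat), NFc e → NFc (e.rename f g)
  | .covar n, _, _ => fun h => h
  | .cons t e, f, g => fun h => ⟨nf_ren_t t _ _ h.1, nf_ren_c e _ _ h.2⟩
  | .mutilde m, f, g => fun h => nf_ren_m m _ _ h
  | .case m₁ m₂, f, g => fun h => ⟨nf_ren_m m₁ _ _ h.1, nf_ren_m m₂ _ _ h.2⟩
theorem nf_ren_m : ∀ (m : MMach) (f g : Nat → Nat), NFm m → NFm (m.rename f g)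
  | .conf t e, f, g => fun h =>
      ⟨nf_ren_t t _ _ h.1, nf_ren_c e _ _ h.2.1, fun hh => h.2.2 (head_ren f g hh)⟩
end

theorem ren_substCo (m : MMach) (e : MCo) (f g : Nat → Nat) :
    (m.rename f (liftN g)).substCo (e.rename f g) = (m.substCo e).rename f g := by
  simp only [MMach.substCo, ren_subst_m, subst_ren_m]
  congr 1 <;> funext n <;> cases n <;> rfl

theorem ren_substTm (m : MMach) (t : MTm) (f g : Nat → Nat) :
    (m.rename (liftN f) g).substTm (t.rename f g) = (m.substTm t).rename f g := by
  simp only [MMach.substTm, ren_subst_m, subst_ren_m]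
  congr 1 <;> funext n <;> cases n <;> rfl

theorem ren_substTmCo (m : MMach) (t : MTm) (e : MCo) (f g : Nat → Nat) :
    (m.rename (liftN f) (liftN g)).substTmCo (t.rename f g) (e.rename f g)
      = (m.substTmCo t e).rename f g := by
  simp only [MMach.substTmCo, ren_subst_m, subst_ren_m]
  congr 1 <;> funext n <;> cases n <;> rfl

mutual
theorem step_ren_t : ∀ {t t' : MTm} (f g : Nat → Nat),
    StepT t t' → StepT (t.rename f g) (t'.rename f g)
  | _, _, f, g, .mu h => .mu (step_ren_m _ _ h)
  | _, _, f, g, .muPair h => .muPair (step_ren_m _ _ h)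
  | _, _, f, g, .injl h => .injl (step_ren_t _ _ h)
  | _, _, f, g, .injr h => .injr (step_ren_t _ _ h)
theorem step_ren_c : ∀ {e e' : MCo} (f g : Nat → Nat),
    StepC e e' → StepC (e.rename f g) (e'.rename f g)
  | _, _, f, g, .consl _ h => .consl _ (step_ren_t _ _ h)
  | _, _, f, g, .consr _ h => .consr _ (step_ren_c _ _ h)
  | _, _, f, g, .mutilde h => .mutilde (step_ren_m _ _ h)
  | _, _, f, g, .casel _ h => .casel _ (step_ren_m _ _ h)
  | _, _, f, g, .caser _ h => .caser _ (step_ren_m _ _ h)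
theorem step_ren_m : ∀ {m m' : MMach} (f g : Nat → Nat),
    StepM m m' → StepM (m.rename f g) (m'.rename f g)
  | _, _, f, g, .mu m e => by
      have h := StepM.mu (m.rename f (liftN g)) (e.rename f g)
      rwa [ren_substCo] at h
  | _, _, f, g, .mutilde t m => by
      have h := StepM.mutilde (t.rename f g) (m.rename (liftN f) g)
      rwa [ren_substTm] at h
  | _, _, f, g, .muPair m u e => by
      have h := StepM.muPair (m.rename (liftN f) (liftN g)) (u.rename f g) (e.rename f g)
      rwa [ren_substTmCo] at h
  | _, _, f, g, .casel t m₁ m₂ => by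
      have h := StepM.casel (t.rename f g) (m₁.rename (liftN f) g) (m₂.rename (liftN f) g)
      rwa [ren_substTm] at h
  | _, _, f, g, .caser t m₁ m₂ => by
      have h := StepM.caser (t.rename f g) (m₁.rename (liftN f) g) (m₂.rename (liftN f) g)
      rwa [ren_substTm] at h
  | _, _, f, g, .congT _ h => .congT _ (step_ren_t _ _ h)
  | _, _, f, g, .congC _ h => .congC _ (step_ren_c _ _ h)
end
def WNt (t : MTm) : Prop := ∃ t', Relation.ReflTransGen StepT t t' ∧ NFt t'
def WNc (e : MCo) : Prop := ∃ e', Relation.ReflTransGen StepC e e' ∧ NFc e'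
def WNm (m : MMach) : Prop := ∃ m', Relation.ReflTransGen StepM m m' ∧ NFm m'

theorem liftStar {α β} {r : α → α → Prop} {s : β → β → Prop} (f : α → β)
    (hf : ∀ a b, r a b → s (f a) (f b)) {a b} (h : Relation.ReflTransGen r a b) :
    Relation.ReflTransGen s (f a) (f b) := by
  induction h with
  | refl => exact .refl
  | tail _ hstep ih => exact ih.tail (hf _ _ hstep)

theorem starT_conf (e : MCo) {t t'} (h : Relation.ReflTransGen StepT t t') :
    Relation.ReflTransGen StepM (.conf t e) (.conf t' e) :=
  liftStar (fun t => MMach.conf t e) (fun _ _ h => StepM.congT e h) h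

theorem starC_conf (t : MTm) {e e'} (h : Relation.ReflTransGen StepC e e') :
    Relation.ReflTransGen StepM (.conf t e) (.conf t e') :=
  liftStar (fun e => MMach.conf t e) (fun _ _ h => StepM.congC t h) h

theorem starT_injl {u u'} (h : Relation.ReflTransGen StepT u u') :
    Relation.ReflTransGen StepT (.injl u) (.injl u') :=
  liftStar MTm.injl (fun _ _ h => StepT.injl h) h

theorem starT_injr {u u'} (h : Relation.ReflTransGen StepT u u') :
    Relation.ReflTransGen StepT (.injr u) (.injr u') :=
  liftStar MTm.injr (fun _ _ h => StepT.injr h) h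

theorem starM_mu {m m'} (h : Relation.ReflTransGen StepM m m') :
    Relation.ReflTransGen StepT (.mu m) (.mu m') :=
  liftStar MTm.mu (fun _ _ h => StepT.mu h) h

theorem starM_muPair {m m'} (h : Relation.ReflTransGen StepM m m') :
    Relation.ReflTransGen StepT (.muPair m) (.muPair m') :=
  liftStar MTm.muPair (fun _ _ h => StepT.muPair h) h

theorem starT_cons (e : MCo) {t t'} (h : Relation.ReflTransGen StepT t t') :
    Relation.ReflTransGen StepC (.cons t e) (.cons t' e) :=
  liftStar (fun t => MCo.cons t e) (fun _ _ h => StepC.consl e h) h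

theorem starC_cons (t : MTm) {e e'} (h : Relation.ReflTransGen StepC e e') :
    Relation.ReflTransGen StepC (.cons t e) (.cons t e') :=
  liftStar (MCo.cons t) (fun _ _ h => StepC.consr t h) h

theorem starM_casel (m₂ : MMach) {m m'} (h : Relation.ReflTransGen StepM m m') :
    Relation.ReflTransGen StepC (.case m m₂) (.case m' m₂) :=
  liftStar (fun m => MCo.case m m₂) (fun _ _ h => StepC.casel m₂ h) h

theorem starM_caser (m₁ : MMach) {m m'} (h : Relation.ReflTransGen StepM m m') :
    Relation.ReflTransGen StepC (.case m₁ m) (.case m₁ m') :=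
  liftStar (MCo.case m₁) (fun _ _ h => StepC.caser m₁ h) h

theorem head_stepT {t t'} (h : StepT t t') (e : MCo) : Head t' e = Head t e := by
  cases h <;> cases e <;> rfl

theorem head_stepC {e e'} (h : StepC e e') (t : MTm) : Head t e' = Head t e := by
  cases h <;> cases t <;> rfl

theorem head_starT {t t'} (h : Relation.ReflTransGen StepT t t') (e : MCo) :
    Head t' e = Head t e := by
  induction h with
  | refl => rfl
  | tail _ hstep ih => rw [head_stepT hstep, ih]

theorem head_starC {e e'} (h : Relation.ReflTransGen StepC e e') (t : MTm) :
    Head t e' = Head t e := by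
  induction h with
  | refl => rfl
  | tail _ hstep ih => rw [head_stepC hstep, ih]

theorem wnm_star {m m'} (h : Relation.ReflTransGen StepM m m') (hw : WNm m') : WNm m := by
  obtain ⟨w, s, n⟩ := hw; exact ⟨w, h.trans s, n⟩

theorem wnm_head {m m'} (h : StepM m m') (hw : WNm m') : WNm m :=
  wnm_star (Relation.ReflTransGen.single h) hw

theorem wn_ren_t (f g : Nat → Nat) {t} (h : WNt t) : WNt (t.rename f g) := by
  obtain ⟨t', s, n⟩ := h
  exact ⟨t'.rename f g, liftStar (MTm.rename f g) (fun _ _ h => step_ren_t f g h) s,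
    nf_ren_t t' f g n⟩

theorem wn_ren_c (f g : Nat → Nat) {e} (h : WNc e) : WNc (e.rename f g) := by
  obtain ⟨e', s, n⟩ := h
  exact ⟨e'.rename f g, liftStar (MCo.rename f g) (fun _ _ h => step_ren_c f g h) s,
    nf_ren_c e' f g n⟩

theorem wn_ren_m (f g : Nat → Nat) {m} (h : WNm m) : WNm (m.rename f g) := by
  obtain ⟨m', s, n⟩ := h
  exact ⟨m'.rename f g, liftStar (MMach.rename f g) (fun _ _ h => step_ren_m f g h) s,
    nf_ren_m m' f g n⟩

theorem wn_conf_nohead {t e} (ht : WNt t) (he : WNc e) (hh : ¬ Head t e) :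
    WNm (.conf t e) := by
  obtain ⟨t', st, nt⟩ := ht; obtain ⟨e', se, ne⟩ := he
  refine ⟨.conf t' e', (starT_conf e st).trans (starC_conf t' se), nt, ne, ?_⟩
  intro hhd
  apply hh
  rw [head_starC se t', head_starT st e] at hhd
  exact hhd

def drop (k : Nat) : Nat → Nat
  | 0 => k
  | n + 1 => n

theorem substCo_covar (m : MMach) (k : Nat) :
    m.substCo (.covar k) = m.rename (fun n => n) (drop k) := by
  show MMach.subst MTm.var (fun n => match n with | 0 => MCo.covar k | n + 1 => .covar n) m = _
  have h : (fun n => match n with | 0 => MCo.covar k | n + 1 => MCo.covar n)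
      = (fun n => MCo.covar (drop k n)) := by funext n; cases n <;> rfl
  rw [h]
  exact subst_vc_m (fun n => n) (drop k) m

theorem wn_conf_covar {w} (k : Nat) (hw : WNt w) : WNm (.conf w (.covar k)) := by
  obtain ⟨w', sw, nw⟩ := hw
  have star1 : Relation.ReflTransGen StepM (.conf w (.covar k)) (.conf w' (.covar k)) :=
    starT_conf _ sw
  cases w' with
  | mu m' =>
      have hstep := StepM.mu m' (.covar k)
      rw [substCo_covar] at hstep
      exact wnm_star star1 (wnm_head hstep ⟨_, .refl, nf_ren_m _ _ _ nw⟩)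
  | var n => exact wnm_star star1 ⟨_, .refl, nw, trivial, by simp [Head]⟩
  | muPair m' => exact wnm_star star1 ⟨_, .refl, nw, trivial, by simp [Head]⟩
  | injl u => exact wnm_star star1 ⟨_, .refl, nw, trivial, by simp [Head]⟩
  | injr u => exact wnm_star star1 ⟨_, .refl, nw, trivial, by simp [Head]⟩

theorem wnt_injl {u} (h : WNt u) : WNt (.injl u) := by
  obtain ⟨u', s, n⟩ := h; exact ⟨.injl u', starT_injl s, n⟩

theorem wnt_injr {u} (h : WNt u) : WNt (.injr u) := by
  obtain ⟨u', s, n⟩ := h; exact ⟨.injr u', starT_injr s, n⟩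

theorem wnt_mu {m} (h : WNm m) : WNt (.mu m) := by
  obtain ⟨m', s, n⟩ := h; exact ⟨.mu m', starM_mu s, n⟩

theorem wnt_muPair {m} (h : WNm m) : WNt (.muPair m) := by
  obtain ⟨m', s, n⟩ := h; exact ⟨.muPair m', starM_muPair s, n⟩

theorem wnc_cons {t e} (ht : WNt t) (he : WNc e) : WNc (.cons t e) := by
  obtain ⟨t', st, nt⟩ := ht; obtain ⟨e', se, ne⟩ := he
  exact ⟨.cons t' e', (starT_cons e st).trans (starC_cons t' se), nt, ne⟩

theorem wnc_case {m₁ m₂} (h₁ : WNm m₁) (h₂ : WNm m₂) : WNc (.case m₁ m₂) := by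
  obtain ⟨m₁', s₁, n₁⟩ := h₁; obtain ⟨m₂', s₂, n₂⟩ := h₂
  exact ⟨.case m₁' m₂', (starM_casel m₂ s₁).trans (starM_caser m₁' s₂), n₁, n₂⟩

theorem wnc_covar (k : Nat) : WNc (.covar k) := ⟨_, .refl, trivial⟩

theorem wnt_var (k : Nat) : WNt (.var k) := ⟨_, .refl, trivial⟩
def FwnP (V : MTm → Prop) (e : MCo) : Prop :=
  ∀ f g : Nat → Nat, WNc (e.rename f g) ∧ ∀ v, V v → WNm (.conf v (e.rename f g))

def TwnP (V : MTm → Prop) (t : MTm) : Prop :=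
  ∀ f g : Nat → Nat, WNt (t.rename f g) ∧ ∀ e, FwnP V e → WNm (.conf (t.rename f g) e)

def Vwn : Ty → MTm → Prop
  | .base => fun t => ∃ n, t = .var n
  | .arrow A B => fun t => (∃ n, t = .var n) ∨
      ∃ m, t = .muPair m ∧ ∀ f g : Nat → Nat,
        WNm (m.rename (liftN f) (liftN g)) ∧
        ∀ u, TwnP (Vwn A) u → ∀ e, FwnP (Vwn B) e →
          WNm ((m.rename (liftN f) (liftN g)).substTmCo u e)
  | .sum A B => fun t => (∃ n, t = .var n) ∨
      (∃ u, t = .injl u ∧ TwnP (Vwn A) u) ∨ (∃ u, t = .injr u ∧ TwnP (Vwn B) u)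

def TWN (A : Ty) : MTm → Prop := TwnP (Vwn A)
def FWN (A : Ty) : MCo → Prop := FwnP (Vwn A)

theorem twn_wnt {A t} (h : TWN A t) : WNt t := by
  have := (h (fun n => n) (fun n => n)).1
  rwa [ren_id_t] at this

theorem twn_ren {A t} (f g : Nat → Nat) (h : TWN A t) : TWN A (t.rename f g) := by
  intro f' g'
  show WNt ((t.rename f g).rename f' g') ∧ _
  rw [renren_t]
  exact h _ _

theorem fwn_ren {A e} (f g : Nat → Nat) (h : FWN A e) : FWN A (e.rename f g) := by
  intro f' g'
  show WNc ((e.rename f g).rename f' g') ∧ _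
  rw [renren_c]
  exact h _ _

theorem vwn_var (A : Ty) (n : Nat) : Vwn A (.var n) := by
  cases A
  · exact ⟨n, rfl⟩
  · exact Or.inl ⟨n, rfl⟩
  · exact Or.inl ⟨n, rfl⟩

theorem vwn_ren {A v} (f g : Nat → Nat) (h : Vwn A v) : Vwn A (v.rename f g) := by
  cases A with
  | base => obtain ⟨n, rfl⟩ := h; exact ⟨f n, rfl⟩
  | arrow A B =>
      rcases h with ⟨n, rfl⟩ | ⟨m, rfl, hm⟩
      · exact Or.inl ⟨f n, rfl⟩
      · refine Or.inr ⟨m.rename (liftN f) (liftN g), rfl, ?_⟩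
        intro f' g'
        rw [renren_m, liftN_comp, liftN_comp]
        exact hm _ _
  | sum A B =>
      rcases h with ⟨n, rfl⟩ | ⟨u, rfl, hu⟩ | ⟨u, rfl, hu⟩
      · exact Or.inl ⟨f n, rfl⟩
      · exact Or.inr (Or.inl ⟨u.rename f g, rfl, twn_ren f g hu⟩)
      · exact Or.inr (Or.inr ⟨u.rename f g, rfl, twn_ren f g hu⟩)

theorem vwn_wnt {A v} (h : Vwn A v) : WNt v := by
  cases A with
  | base => obtain ⟨n, rfl⟩ := h; exact wnt_var n
  | arrow A B =>
      rcases h with ⟨n, rfl⟩ | ⟨m, rfl, hm⟩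
      · exact wnt_var n
      · have := (hm (fun n => n) (fun n => n)).1
        rw [liftN_id, ren_id_m] at this
        exact wnt_muPair this
  | sum A B =>
      rcases h with ⟨n, rfl⟩ | ⟨u, rfl, hu⟩ | ⟨u, rfl, hu⟩
      · exact wnt_var n
      · exact wnt_injl (twn_wnt hu)
      · exact wnt_injr (twn_wnt hu)

theorem vwn_twn {A v} (h : Vwn A v) : TWN A v := by
  intro f g
  refine ⟨wn_ren_t f g (vwn_wnt h), ?_⟩
  intro e he
  have h2 := (he (fun n => n) (fun n => n)).2 (v.rename f g) (vwn_ren f g h)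
  rwa [ren_id_c] at h2

theorem var_twn (A : Ty) (n : Nat) : TWN A (.var n) := vwn_twn (vwn_var A n)

theorem covar_fwn (A : Ty) (k : Nat) : FWN A (.covar k) := by
  intro f g
  show WNc (.covar (g k)) ∧ _
  refine ⟨wnc_covar _, ?_⟩
  intro v hv
  exact wn_conf_covar _ (vwn_wnt hv)

theorem cons_fwn {A B u e} (hu : TWN A u) (he : FWN B e) : FWN (.arrow A B) (.cons u e) := by
  intro f g
  show WNc (.cons (u.rename f g) (e.rename f g)) ∧ _
  constructor
  · exact wnc_cons (twn_wnt (twn_ren f g hu)) (he f g).1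
  · intro v hv
    rcases hv with ⟨n, rfl⟩ | ⟨m, rfl, hm⟩
    · exact wn_conf_nohead (wnt_var n)
        (wnc_cons (twn_wnt (twn_ren f g hu)) (he f g).1) (by simp [Head, MCo.rename])
    · have hstep := StepM.muPair m (u.rename f g) (e.rename f g)
      apply wnm_head hstep
      have h2 := (hm (fun n => n) (fun n => n)).2 (u.rename f g) (twn_ren f g hu)
        (e.rename f g) (fwn_ren f g he)
      rwa [liftN_id, ren_id_m] at h2

def GoodWN (Γ : List Ty) (σ : Nat → MTm) : Prop :=
  ∀ n B, Γ[n]? = some B → TWN B (σ n)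

def extT (u : MTm) (σ : Nat → MTm) : Nat → MTm
  | 0 => u
  | n + 1 => σ n

theorem goodwn_ext {Γ σ A u} (h : GoodWN Γ σ) (hu : TWN A u) : GoodWN (A :: Γ) (extT u σ) := by
  intro n B hB
  cases n with
  | zero => simp at hB; subst hB; exact hu
  | succ n => exact h n B hB

theorem goodwn_ren {Γ σ} (f g : Nat → Nat) (h : GoodWN Γ σ) :
    GoodWN Γ (fun n => (σ n).rename f g) := fun n B hB => twn_ren f g (h n B hB)

theorem twn_apply {B w e} (hw : TWN B w) (he : FWN B e) : WNm (.conf w e) := by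
  have h := (hw (fun n => n) (fun n => n)).2 e he
  rwa [ren_id_t] at h
theorem lam_wn {Γ : List Ty} {A B : Ty} {tt : LTm}
    (ih : ∀ σt σc, GoodWN (A :: Γ) σt → TWN B ((transl tt).subst σt σc))
    (σt : Nat → MTm) (σc : Nat → MCo) (hσ : GoodWN Γ σt) :
    TWN (.arrow A B) (.muPair (.conf
      ((transl tt).subst (upT (upC σt σc).1 (upC σt σc).2).1
                         (upT (upC σt σc).1 (upC σt σc).2).2) (.covar 0))) := by
  refine vwn_twn (Or.inr ⟨_, rfl, ?_⟩)
  intro f g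
  have hgood : ∀ (f g : Nat → Nat),
      GoodWN (A :: Γ) (fun n =>
        (((upT (upC σt σc).1 (upC σt σc).2).1 n).rename (liftN f) (liftN g))) := by
    intro f g n B' hB
    cases n with
    | zero =>
        simp at hB; subst hB
        exact var_twn A 0
    | succ n =>
        have e1 : ((upT (upC σt σc).1 (upC σt σc).2).1 (n + 1)).rename (liftN f) (liftN g)
            = (σt n).rename (fun k => Nat.succ (f k)) (fun k => Nat.succ (g k)) := by
          show ((MTm.rename Nat.succ id (MTm.rename id Nat.succ (σt n))).rename
            (liftN f) (liftN g)) = _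
          simp only [renren_t, liftN, id]
        show TWN B' (((upT (upC σt σc).1 (upC σt σc).2).1 (n + 1)).rename (liftN f) (liftN g))
        rw [e1]
        exact twn_ren _ _ (hσ n B' hB)
  constructor
  · show WNm (MMach.conf (((transl tt).subst _ _).rename (liftN f) (liftN g))
      (MCo.covar (liftN g 0)))
    rw [subst_ren_t]
    exact wn_conf_covar _ (twn_wnt (ih _ _ (hgood f g)))
  · intro u hu e he
    show WNm (MMach.substTmCo (MMach.conf (((transl tt).subst _ _).rename (liftN f) (liftN g))
      (MCo.covar (liftN g 0))) u e)
    simp only [MMach.substTmCo, MMach.subst, MCo.subst, liftN]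
    rw [subst_ren_t, subst_subst_t]
    have hF : (fun n => MTm.subst
          (fun n => match n with | 0 => u | n + 1 => MTm.var n)
          (fun n => match n with | 0 => e | n + 1 => MCo.covar n)
          (((upT (upC σt σc).1 (upC σt σc).2).1 n).rename (liftN f) (liftN g)))
        = extT u (fun n => (σt n).rename f g) := by
      funext n
      cases n with
      | zero => rfl
      | succ n =>
          show MTm.subst _ _ ((MTm.rename Nat.succ id
            (MTm.rename id Nat.succ (σt n))).rename (liftN f) (liftN g)) = _
          simp only [renren_t, ren_subst_t, liftN, id]
          show (σt n).subst (fun k => MTm.var (f k)) (fun k => MCo.covar (g k)) = _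
          rw [subst_vc_t]
          rfl
    rw [hF]
    apply twn_apply (ih _ _ (goodwn_ext (goodwn_ren f g hσ) hu)) he
theorem upC_good {Γ σt} (σc : Nat → MCo) (f g : Nat → Nat) (hσ : GoodWN Γ σt) :
    GoodWN Γ (fun n => ((upC σt σc).1 n).rename f (liftN g)) := by
  intro n B hB
  have e1 : ((upC σt σc).1 n).rename f (liftN g)
      = (σt n).rename f (fun k => Nat.succ (g k)) := by
    show (MTm.rename id Nat.succ (σt n)).rename f (liftN g) = _
    simp only [renren_t, liftN, id]
  show TWN B (((upC σt σc).1 n).rename f (liftN g))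
  rw [e1]
  exact twn_ren _ _ (hσ n B hB)

theorem upC_substCo_entry (σt : Nat → MTm) (σc : Nat → MCo) (f g : Nat → Nat) (e : MCo) :
    (fun n => MTm.subst (fun k => MTm.var (f k))
        (fun k => (fun n => match n with | 0 => e | n + 1 => MCo.covar n) (liftN g k))
        ((upC σt σc).1 n))
      = fun n => (σt n).rename f g := by
  funext n
  show (MTm.rename id Nat.succ (σt n)).subst _ _ = _
  simp only [ren_subst_t, liftN, id]
  show (σt n).subst (fun k => MTm.var (f k)) (fun k => MCo.covar (g k)) = _
  rw [subst_vc_t]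

theorem app_wn {Γ : List Ty} {A B : Ty} {t u : LTm}
    (iht : ∀ σt σc, GoodWN Γ σt → TWN (.arrow A B) ((transl t).subst σt σc))
    (ihu : ∀ σt σc, GoodWN Γ σt → TWN A ((transl u).subst σt σc))
    (σt : Nat → MTm) (σc : Nat → MCo) (hσ : GoodWN Γ σt) :
    TWN B (.mu (.conf ((transl t).subst (upC σt σc).1 (upC σt σc).2)
      (.cons ((transl u).subst (upC σt σc).1 (upC σt σc).2) (.covar 0)))) := by
  intro f g
  constructor
  · show WNt (.mu ((MMach.conf _ _).rename f (liftN g)))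
    apply wnt_mu
    show WNm (.conf (((transl t).subst _ _).rename f (liftN g))
      (.cons (((transl u).subst _ _).rename f (liftN g)) (.covar (liftN g 0))))
    rw [subst_ren_t, subst_ren_t]
    refine twn_apply (iht _ _ (upC_good σc f g hσ)) ?_
    show FWN (Ty.arrow A B) (.cons _ (.covar 0))
    exact cons_fwn (ihu _ _ (upC_good σc f g hσ)) (covar_fwn B 0)
  · intro e he
    show WNm (.conf (.mu ((MMach.conf _ _).rename f (liftN g))) e)
    apply wnm_head (StepM.mu _ e)
    show WNm (MMach.subst _ _ _)
    simp only [MMach.rename, MCo.rename, MTm.rename, MMach.subst, MCo.subst, liftN]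
    rw [ren_subst_t, subst_subst_t, ren_subst_t, subst_subst_t]
    rw [upC_substCo_entry σt σc f g e]
    refine twn_apply (iht _ _ (goodwn_ren f g hσ)) ?_
    exact cons_fwn (ihu _ _ (goodwn_ren f g hσ)) he
theorem ren_liftg_eq (m : MMach) (f g : Nat → Nat) :
    (m.rename f (liftN (fun k => Nat.succ (g k)))).substCo (.covar 0)
      = m.rename f (liftN g) := by
  rw [substCo_covar, renren_m]
  congr 1 <;> funext n <;> cases n <;> rfl

theorem case_fwn {A B : Ty} {m₁ m₂ : MMach}
    (h₁ : ∀ f g : Nat → Nat, WNm (m₁.rename (liftN f) g) ∧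
      ∀ p, TWN A p → WNm ((m₁.rename (liftN f) g).substTm p))
    (h₂ : ∀ f g : Nat → Nat, WNm (m₂.rename (liftN f) g) ∧
      ∀ p, TWN B p → WNm ((m₂.rename (liftN f) g).substTm p)) :
    FWN (.sum A B) (.case m₁ m₂) := by
  intro f g
  constructor
  · show WNc (.case (m₁.rename (liftN f) g) (m₂.rename (liftN f) g))
    exact wnc_case (h₁ f g).1 (h₂ f g).1
  · intro v hv
    rcases hv with ⟨n, rfl⟩ | ⟨p, rfl, hp⟩ | ⟨p, rfl, hp⟩
    · refine wn_conf_nohead (wnt_var n) ?_ (by simp [Head, MCo.rename])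
      show WNc (.case (m₁.rename (liftN f) g) (m₂.rename (liftN f) g))
      exact wnc_case (h₁ f g).1 (h₂ f g).1
    · show WNm (.conf (.injl p) (.case (m₁.rename (liftN f) g) (m₂.rename (liftN f) g)))
      exact wnm_head (StepM.casel p _ _) ((h₁ f g).2 p hp)
    · show WNm (.conf (.injr p) (.case (m₁.rename (liftN f) g) (m₂.rename (liftN f) g)))
      exact wnm_head (StepM.caser p _ _) ((h₂ f g).2 p hp)
theorem case_entry (σt : Nat → MTm) (σc : Nat → MCo) (f g : Nat → Nat) (e : MCo) :
    (fun n => MTm.subst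
        (fun k => (upT MTm.var (fun n => match n with | 0 => e | n + 1 => MCo.covar n)).1
          (liftN f k))
        (fun k => (upT MTm.var (fun n => match n with | 0 => e | n + 1 => MCo.covar n)).2
          (liftN g k))
        ((upT (upC σt σc).1 (upC σt σc).2).1 n))
      = extT (.var 0) (fun n => (σt n).rename (fun k => Nat.succ (f k)) g) := by
  funext n
  cases n with
  | zero => rfl
  | succ n =>
      show MTm.subst _ _ (MTm.rename Nat.succ id (MTm.rename id Nat.succ (σt n))) = _
      simp only [renren_t, ren_subst_t, liftN, id, upT, MTm.rename, MCo.rename]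
      show (σt n).subst (fun k => MTm.var (Nat.succ (f k))) (fun k => MCo.covar (g k)) = _
      rw [subst_vc_t]
      rfl

theorem hbr_wn {Γ : List Ty} {C D : Ty} {uu : LTm}
    (ih : ∀ σt' σc', GoodWN (D :: Γ) σt' → TWN C ((transl uu).subst σt' σc'))
    (σ' : Nat → MTm) (hσ' : GoodWN Γ σ') (F G : Nat → Nat) (σc' : Nat → MCo)
    (e : MCo) (he : FWN C e) (f' g' : Nat → Nat) :
    WNm ((MMach.conf
        ((transl uu).subst (extT (.var 0)
          (fun n => (σ' n).rename (fun k => Nat.succ (F k)) G)) σc')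
        (MCo.rename Nat.succ id e)).rename (liftN f') g') ∧
    ∀ p, TWN D p → WNm (((MMach.conf
        ((transl uu).subst (extT (.var 0)
          (fun n => (σ' n).rename (fun k => Nat.succ (F k)) G)) σc')
        (MCo.rename Nat.succ id e)).rename (liftN f') g').substTm p) := by
  constructor
  · show WNm (.conf (((transl uu).subst _ _).rename (liftN f') g')
      ((MCo.rename Nat.succ id e).rename (liftN f') g'))
    rw [subst_ren_t, renren_c]
    refine twn_apply (ih _ _ ?_) (fwn_ren _ _ he)
    intro n B hB
    cases n with
    | zero => simp at hB; subst hB; exact var_twn _ 0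
    | succ n =>
        have e1 : (extT (MTm.var 0)
              (fun n => (σ' n).rename (fun k => Nat.succ (F k)) G) (n+1)).rename (liftN f') g'
            = (σ' n).rename (fun k => Nat.succ (f' (F k))) (fun k => g' (G k)) := by
          show ((σ' n).rename (fun k => Nat.succ (F k)) G).rename (liftN f') g' = _
          simp only [renren_t, liftN]
        show TWN B ((extT (MTm.var 0)
          (fun n => (σ' n).rename (fun k => Nat.succ (F k)) G) (n+1)).rename (liftN f') g')
        rw [e1]
        exact twn_ren _ _ (hσ' n B hB)
  · intro p hp
    show WNm (MMach.substTm (.conf (((transl uu).subst _ _).rename (liftN f') g')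
      ((MCo.rename Nat.succ id e).rename (liftN f') g')) p)
    simp only [MMach.substTm, MMach.subst]
    rw [subst_ren_t, subst_subst_t, renren_c, ren_subst_c]
    have e2 : (fun n => MTm.subst
          (fun k => match k with | 0 => p | k + 1 => MTm.var k) MCo.covar
          ((extT (MTm.var 0) (fun n => (σ' n).rename (fun k => Nat.succ (F k)) G) n).rename
            (liftN f') g'))
        = extT p (fun n => (σ' n).rename (fun k => f' (F k)) (fun k => g' (G k))) := by
      funext n
      cases n with
      | zero => rfl
      | succ n =>
          show MTm.subst _ _ (((σ' n).rename (fun k => Nat.succ (F k)) G).rename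
            (liftN f') g') = _
          simp only [renren_t, ren_subst_t, liftN]
          show (σ' n).subst (fun k => MTm.var (f' (F k))) (fun k => MCo.covar (g' (G k))) = _
          rw [subst_vc_t]
          rfl
    rw [e2]
    refine twn_apply (ih _ _ (goodwn_ext ?_ hp)) ?_
    · intro n B hB
      show TWN B ((σ' n).rename (fun k => f' (F k)) (fun k => g' (G k)))
      exact twn_ren _ _ (hσ' n B hB)
    · show FWN C (e.subst (fun n => MTm.var (f' n)) (fun n => MCo.covar (g' (id n))))
      rw [subst_vc_c]
      exact fwn_ren _ _ he
theorem case_wn {Γ : List Ty} {A B C : Ty} {t u₁ u₂ : LTm}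
    (iht : ∀ σt σc, GoodWN Γ σt → TWN (.sum A B) ((transl t).subst σt σc))
    (ih1 : ∀ σt σc, GoodWN (A :: Γ) σt → TWN C ((transl u₁).subst σt σc))
    (ih2 : ∀ σt σc, GoodWN (B :: Γ) σt → TWN C ((transl u₂).subst σt σc))
    (σt : Nat → MTm) (σc : Nat → MCo) (hσ : GoodWN Γ σt) :
    TWN C (.mu (.conf ((transl t).subst (upC σt σc).1 (upC σt σc).2)
      (.case
        (.conf ((transl u₁).subst (upT (upC σt σc).1 (upC σt σc).2).1
                                  (upT (upC σt σc).1 (upC σt σc).2).2) (.covar 0))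
        (.conf ((transl u₂).subst (upT (upC σt σc).1 (upC σt σc).2).1
                                  (upT (upC σt σc).1 (upC σt σc).2).2) (.covar 0))))) := by
  have main : ∀ (f g : Nat → Nat) (e : MCo), FWN C e →
      WNm ((MMach.rename f (liftN g) (MMach.conf
        ((transl t).subst (upC σt σc).1 (upC σt σc).2)
        (.case
          (.conf ((transl u₁).subst (upT (upC σt σc).1 (upC σt σc).2).1
                                    (upT (upC σt σc).1 (upC σt σc).2).2) (.covar 0))
          (.conf ((transl u₂).subst (upT (upC σt σc).1 (upC σt σc).2).1
                                    (upT (upC σt σc).1 (upC σt σc).2).2) (.covar 0))))).substCo e) := by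
    intro f g e he
    simp only [MMach.substCo, MMach.rename, MCo.rename, MMach.subst, MCo.subst,
      MTm.rename, MTm.subst, liftN]
    rw [ren_subst_t, subst_subst_t, upC_substCo_entry σt σc f g e]
    rw [ren_subst_t, subst_subst_t, case_entry σt σc f g e]
    rw [ren_subst_t, subst_subst_t, case_entry σt σc f g e]
    have ecot : (upT MTm.var (fun n => match n with | 0 => e | n + 1 => MCo.covar n)).2 0
        = MCo.rename Nat.succ id e := rfl
    rw [ecot]
    refine twn_apply (iht _ _ (goodwn_ren f g hσ)) (case_fwn ?_ ?_)
    · intro f' g'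
      exact hbr_wn ih1 σt hσ f g _ e he f' g'
    · intro f' g'
      exact hbr_wn ih2 σt hσ f g _ e he f' g'
  intro f g
  constructor
  · show WNt (.mu ((MMach.conf _ _).rename f (liftN g)))
    apply wnt_mu
    rw [← ren_liftg_eq _ f g]
    exact main f (fun k => Nat.succ (g k)) (.covar 0) (covar_fwn C 0)
  · intro e he
    show WNm (.conf (.mu ((MMach.conf _ _).rename f (liftN g))) e)
    exact wnm_head (StepM.mu _ e) (main f g e he)
theorem adeq_wn : ∀ {Γ : List Ty} {tt : LTm} {A : Ty}, HasTy Γ tt A →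
    ∀ σt σc, GoodWN Γ σt → TWN A ((transl tt).subst σt σc) := by
  intro Γ tt A ht
  induction ht with
  | var h => intro σt σc hσ; exact hσ _ _ h
  | lam ht ih => intro σt σc hσ; exact lam_wn ih σt σc hσ
  | app ht hu iht ihu => intro σt σc hσ; exact app_wn iht ihu σt σc hσ
  | injl ht ih => intro σt σc hσ; exact vwn_twn (Or.inr (Or.inl ⟨_, rfl, ih σt σc hσ⟩))
  | injr ht ih => intro σt σc hσ; exact vwn_twn (Or.inr (Or.inr ⟨_, rfl, ih σt σc hσ⟩))
  | case ht h1 h2 iht ih1 ih2 => intro σt σc hσ; exact case_wn iht ih1 ih2 σt σc hσ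
def Psh (m : MMach) : Prop :=
  ∃ u : MTm, WNt u ∧ (Relation.ReflTransGen StepM m (.conf (.injl u) (.covar 0)) ∨
                      Relation.ReflTransGen StepM m (.conf (.injr u) (.covar 0)))

theorem psh_star {m m'} (h : Relation.ReflTransGen StepM m m') (hp : Psh m') : Psh m := by
  obtain ⟨u, hu, hs | hs⟩ := hp
  · exact ⟨u, hu, Or.inl (h.trans hs)⟩
  · exact ⟨u, hu, Or.inr (h.trans hs)⟩

theorem psh_head {m m'} (h : StepM m m') (hp : Psh m') : Psh m :=
  psh_star (Relation.ReflTransGen.single h) hp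

def FshP (V : MTm → Prop) (e : MCo) : Prop :=
  ∀ f : Nat → Nat, ∀ v, V v → Psh (.conf v (e.rename f id))

def TshP (V : MTm → Prop) (t : MTm) : Prop :=
  ∀ f g : Nat → Nat, ∀ e, FshP V e → Psh (.conf (t.rename f g) e)

def Vsh : Ty → MTm → Prop
  | .base => fun _ => False
  | .arrow A B => fun t => ∃ m, t = .muPair m ∧ ∀ f g : Nat → Nat,
      ∀ u, TWN A u → TshP (Vsh A) u → ∀ e, FshP (Vsh B) e →
        Psh ((m.rename (liftN f) (liftN g)).substTmCo u e)
  | .sum A B => fun t =>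
      (∃ u, t = .injl u ∧ TWN A u ∧ TshP (Vsh A) u) ∨
      (∃ u, t = .injr u ∧ TWN B u ∧ TshP (Vsh B) u)

def TSH (A : Ty) : MTm → Prop := TshP (Vsh A)
def FSH (A : Ty) : MCo → Prop := FshP (Vsh A)

theorem tsh_ren {A t} (f g : Nat → Nat) (h : TSH A t) : TSH A (t.rename f g) := by
  intro f' g' e he
  show Psh (.conf ((t.rename f g).rename f' g') e)
  rw [renren_t]
  exact h _ _ e he

theorem fsh_ren {A e} (f : Nat → Nat) (h : FSH A e) : FSH A (e.rename f id) := by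
  intro f' v hv
  show Psh (.conf v ((e.rename f id).rename f' id))
  rw [renren_c]
  exact h _ v hv

theorem vsh_ren {A v} (f g : Nat → Nat) (h : Vsh A v) : Vsh A (v.rename f g) := by
  cases A with
  | base => exact h.elim
  | arrow A B =>
      obtain ⟨m, rfl, hm⟩ := h
      refine ⟨m.rename (liftN f) (liftN g), rfl, ?_⟩
      intro f' g'
      rw [renren_m, liftN_comp, liftN_comp]
      exact hm _ _
  | sum A B =>
      rcases h with ⟨u, rfl, h1, h2⟩ | ⟨u, rfl, h1, h2⟩
      · exact Or.inl ⟨u.rename f g, rfl, twn_ren f g h1, tsh_ren f g h2⟩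
      · exact Or.inr ⟨u.rename f g, rfl, twn_ren f g h1, tsh_ren f g h2⟩

theorem vsh_tsh {A v} (h : Vsh A v) : TSH A v := by
  intro f g e he
  have h2 := he (fun n => n) (v.rename f g) (vsh_ren f g h)
  have h3 : MCo.rename (fun n => n) id e = e := ren_id_c e
  rwa [h3] at h2

theorem tsh_apply {B w e} (hw : TSH B w) (he : FSH B e) : Psh (.conf w e) := by
  have h := hw (fun n => n) (fun n => n) e he
  rwa [ren_id_t] at h

theorem covar0_fsh_sum {A B : Ty} : FSH (.sum A B) (.covar 0) := by
  intro f v hv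
  show Psh (.conf v (.covar 0))
  rcases hv with ⟨u, rfl, h1, _⟩ | ⟨u, rfl, h1, _⟩
  · exact ⟨u, twn_wnt h1, Or.inl .refl⟩
  · exact ⟨u, twn_wnt h1, Or.inr .refl⟩

theorem cons_fsh {A B u e} (hu1 : TWN A u) (hu2 : TSH A u) (he : FSH B e) :
    FSH (.arrow A B) (.cons u e) := by
  intro f v hv
  obtain ⟨m, rfl, hm⟩ := hv
  show Psh (.conf (.muPair m) (.cons (u.rename f id) (e.rename f id)))
  apply psh_head (StepM.muPair m (u.rename f id) (e.rename f id))
  have h2 := hm (fun n => n) (fun n => n) (u.rename f id) (twn_ren f id hu1)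
    (tsh_ren f id hu2) (e.rename f id) (fsh_ren f he)
  rwa [liftN_id, ren_id_m] at h2

theorem case_fsh {A B : Ty} {m₁ m₂ : MMach}
    (h₁ : ∀ f : Nat → Nat, ∀ p, TWN A p → TSH A p →
      Psh ((m₁.rename (liftN f) id).substTm p))
    (h₂ : ∀ f : Nat → Nat, ∀ p, TWN B p → TSH B p →
      Psh ((m₂.rename (liftN f) id).substTm p)) :
    FSH (.sum A B) (.case m₁ m₂) := by
  intro f v hv
  rcases hv with ⟨p, rfl, hp1, hp2⟩ | ⟨p, rfl, hp1, hp2⟩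
  · show Psh (.conf (.injl p) (.case (m₁.rename (liftN f) id) (m₂.rename (liftN f) id)))
    exact psh_head (StepM.casel p _ _) (h₁ f p hp1 hp2)
  · show Psh (.conf (.injr p) (.case (m₁.rename (liftN f) id) (m₂.rename (liftN f) id)))
    exact psh_head (StepM.caser p _ _) (h₂ f p hp1 hp2)

def GoodSH (Γ : List Ty) (σ : Nat → MTm) : Prop :=
  ∀ n B, Γ[n]? = some B → TWN B (σ n) ∧ TSH B (σ n)

theorem goodsh_wn {Γ σ} (h : GoodSH Γ σ) : GoodWN Γ σ := fun n B hB => (h n B hB).1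

theorem goodsh_ext {Γ σ A u} (h : GoodSH Γ σ) (hu1 : TWN A u) (hu2 : TSH A u) :
    GoodSH (A :: Γ) (extT u σ) := by
  intro n B hB
  cases n with
  | zero => simp at hB; subst hB; exact ⟨hu1, hu2⟩
  | succ n => exact h n B hB

theorem goodsh_ren {Γ σ} (f g : Nat → Nat) (h : GoodSH Γ σ) :
    GoodSH Γ (fun n => (σ n).rename f g) :=
  fun n B hB => ⟨twn_ren f g (h n B hB).1, tsh_ren f g (h n B hB).2⟩
theorem lam_entry (σt : Nat → MTm) (σc : Nat → MCo) (f g : Nat → Nat) (u : MTm) (e : MCo) :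
    (fun n => MTm.subst
          (fun n => match n with | 0 => u | n + 1 => MTm.var n)
          (fun n => match n with | 0 => e | n + 1 => MCo.covar n)
          (((upT (upC σt σc).1 (upC σt σc).2).1 n).rename (liftN f) (liftN g)))
        = extT u (fun n => (σt n).rename f g) := by
  funext n
  cases n with
  | zero => rfl
  | succ n =>
      show MTm.subst _ _ ((MTm.rename Nat.succ id
        (MTm.rename id Nat.succ (σt n))).rename (liftN f) (liftN g)) = _
      simp only [renren_t, ren_subst_t, liftN, id]
      show (σt n).subst (fun k => MTm.var (f k)) (fun k => MCo.covar (g k)) = _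
      rw [subst_vc_t]
      rfl

theorem lam_sh {Γ : List Ty} {A B : Ty} {tt : LTm}
    (ih : ∀ σt σc, GoodSH (A :: Γ) σt → TSH B ((transl tt).subst σt σc))
    (σt : Nat → MTm) (σc : Nat → MCo) (hσ : GoodSH Γ σt) :
    TSH (.arrow A B) (.muPair (.conf
      ((transl tt).subst (upT (upC σt σc).1 (upC σt σc).2).1
                         (upT (upC σt σc).1 (upC σt σc).2).2) (.covar 0))) := by
  refine vsh_tsh ⟨_, rfl, ?_⟩
  intro f g u hu1 hu2 e he
  show Psh (MMach.substTmCo (MMach.conf (((transl tt).subst _ _).rename (liftN f) (liftN g))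
    (MCo.covar (liftN g 0))) u e)
  simp only [MMach.substTmCo, MMach.subst, MCo.subst, liftN]
  rw [subst_ren_t, subst_subst_t, lam_entry σt σc f g u e]
  exact tsh_apply (ih _ _ (goodsh_ext (goodsh_ren f g hσ) hu1 hu2)) he

theorem app_sh {Γ : List Ty} {A B : Ty} {t u : LTm}
    (iht : ∀ σt σc, GoodSH Γ σt → TSH (.arrow A B) ((transl t).subst σt σc))
    (ihuw : ∀ σt σc, GoodWN Γ σt → TWN A ((transl u).subst σt σc))
    (ihu : ∀ σt σc, GoodSH Γ σt → TSH A ((transl u).subst σt σc))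
    (σt : Nat → MTm) (σc : Nat → MCo) (hσ : GoodSH Γ σt) :
    TSH B (.mu (.conf ((transl t).subst (upC σt σc).1 (upC σt σc).2)
      (.cons ((transl u).subst (upC σt σc).1 (upC σt σc).2) (.covar 0)))) := by
  intro f g e he
  show Psh (.conf (.mu ((MMach.conf _ _).rename f (liftN g))) e)
  apply psh_head (StepM.mu _ e)
  show Psh (MMach.subst _ _ _)
  simp only [MMach.rename, MCo.rename, MTm.rename, MMach.subst, MCo.subst, liftN]
  rw [ren_subst_t, subst_subst_t, ren_subst_t, subst_subst_t]
  rw [upC_substCo_entry σt σc f g e]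
  exact tsh_apply (iht _ _ (goodsh_ren f g hσ))
    (cons_fsh (ihuw _ _ (goodwn_ren f g (goodsh_wn hσ)))
      (ihu _ _ (goodsh_ren f g hσ)) he)

theorem hbr_sh {Γ : List Ty} {C D : Ty} {uu : LTm}
    (ih : ∀ σt' σc', GoodSH (D :: Γ) σt' → TSH C ((transl uu).subst σt' σc'))
    (σ' : Nat → MTm) (hσ' : GoodSH Γ σ') (F G : Nat → Nat) (σc' : Nat → MCo)
    (e : MCo) (he : FSH C e) (f' : Nat → Nat) (p : MTm) (hp1 : TWN D p) (hp2 : TSH D p) :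
    Psh (((MMach.conf
        ((transl uu).subst (extT (.var 0)
          (fun n => (σ' n).rename (fun k => Nat.succ (F k)) G)) σc')
        (MCo.rename Nat.succ id e)).rename (liftN f') id).substTm p) := by
  show Psh (MMach.substTm (.conf (((transl uu).subst _ _).rename (liftN f') id)
    ((MCo.rename Nat.succ id e).rename (liftN f') id)) p)
  simp only [MMach.substTm, MMach.subst]
  rw [subst_ren_t, subst_subst_t, renren_c, ren_subst_c]
  have e2 : (fun n => MTm.subst
        (fun k => match k with | 0 => p | k + 1 => MTm.var k) MCo.covar
        ((extT (MTm.var 0) (fun n => (σ' n).rename (fun k => Nat.succ (F k)) G) n).rename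
          (liftN f') id))
      = extT p (fun n => (σ' n).rename (fun k => f' (F k)) (fun k => id (G k))) := by
    funext n
    cases n with
    | zero => rfl
    | succ n =>
        show MTm.subst _ _ (((σ' n).rename (fun k => Nat.succ (F k)) G).rename
          (liftN f') id) = _
        simp only [renren_t, ren_subst_t, liftN]
        show (σ' n).subst (fun k => MTm.var (f' (F k))) (fun k => MCo.covar (id (G k))) = _
        rw [subst_vc_t]
        rfl
  rw [e2]
  refine tsh_apply (ih _ _ (goodsh_ext ?_ hp1 hp2)) ?_
  · intro n B hB
    refine ⟨twn_ren _ _ (hσ' n B hB).1, tsh_ren _ _ (hσ' n B hB).2⟩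
  · show FSH C (e.subst (fun n => MTm.var (f' n)) (fun n => MCo.covar (id (id n))))
    rw [subst_vc_c]
    exact fsh_ren _ he

theorem case_sh {Γ : List Ty} {A B C : Ty} {t u₁ u₂ : LTm}
    (iht : ∀ σt σc, GoodSH Γ σt → TSH (.sum A B) ((transl t).subst σt σc))
    (ih1 : ∀ σt σc, GoodSH (A :: Γ) σt → TSH C ((transl u₁).subst σt σc))
    (ih2 : ∀ σt σc, GoodSH (B :: Γ) σt → TSH C ((transl u₂).subst σt σc))
    (σt : Nat → MTm) (σc : Nat → MCo) (hσ : GoodSH Γ σt) :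
    TSH C (.mu (.conf ((transl t).subst (upC σt σc).1 (upC σt σc).2)
      (.case
        (.conf ((transl u₁).subst (upT (upC σt σc).1 (upC σt σc).2).1
                                  (upT (upC σt σc).1 (upC σt σc).2).2) (.covar 0))
        (.conf ((transl u₂).subst (upT (upC σt σc).1 (upC σt σc).2).1
                                  (upT (upC σt σc).1 (upC σt σc).2).2) (.covar 0))))) := by
  intro f g e he
  show Psh (.conf (.mu ((MMach.conf _ _).rename f (liftN g))) e)
  apply psh_head (StepM.mu _ e)
  show Psh (MMach.subst _ _ _)
  simp only [MMach.substCo, MMach.rename, MCo.rename, MMach.subst, MCo.subst,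
    MTm.rename, MTm.subst, liftN]
  rw [ren_subst_t, subst_subst_t, upC_substCo_entry σt σc f g e]
  rw [ren_subst_t, subst_subst_t, case_entry σt σc f g e]
  rw [ren_subst_t, subst_subst_t, case_entry σt σc f g e]
  have ecot : (upT MTm.var (fun n => match n with | 0 => e | n + 1 => MCo.covar n)).2 0
      = MCo.rename Nat.succ id e := rfl
  rw [ecot]
  refine tsh_apply (iht _ _ (goodsh_ren f g hσ)) (case_fsh ?_ ?_)
  · intro f' p hp1 hp2
    exact hbr_sh ih1 σt hσ f g _ e he f' p hp1 hp2
  · intro f' p hp1 hp2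
    exact hbr_sh ih2 σt hσ f g _ e he f' p hp1 hp2
theorem subst_id_t (t : MTm) : t.subst MTm.var MCo.covar = t := by
  have h : t.subst MTm.var MCo.covar
      = t.subst (fun n => .var ((fun k => k) n)) (fun n => .covar ((fun k => k) n)) := rfl
  rw [h, subst_vc_t, ren_id_t]

theorem adeq_sh : ∀ {Γ : List Ty} {tt : LTm} {A : Ty}, HasTy Γ tt A →
    ∀ σt σc, GoodSH Γ σt → TSH A ((transl tt).subst σt σc) := by
  intro Γ tt A ht
  induction ht with
  | var h => intro σt σc hσ; exact (hσ _ _ h).2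
  | lam ht ih => intro σt σc hσ; exact lam_sh ih σt σc hσ
  | app ht hu iht ihu =>
      intro σt σc hσ
      exact app_sh iht (fun σt σc h => adeq_wn hu σt σc h) ihu σt σc hσ
  | injl ht ih =>
      intro σt σc hσ
      exact vsh_tsh (Or.inl ⟨_, rfl,
        adeq_wn ht σt σc (goodsh_wn hσ), ih σt σc hσ⟩)
  | injr ht ih =>
      intro σt σc hσ
      exact vsh_tsh (Or.inr ⟨_, rfl,
        adeq_wn ht σt σc (goodsh_wn hσ), ih σt σc hσ⟩)
  | case ht h1 h2 iht ih1 ih2 => intro σt σc hσ; exact case_sh iht ih1 ih2 σt σc hσ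

theorem sum_canonicity' {t : LTm} {A₁ A₂ : Ty} (ht : HasTy [] t (.sum A₁ A₂)) :
    ∃ m : MMach, Relation.ReflTransGen StepM (.conf (transl t) (.covar 0)) m ∧
      (¬∃ m', StepM m m') ∧
      ∃ u : MTm, m = .conf (.injl u) (.covar 0) ∨ m = .conf (.injr u) (.covar 0) := by
  have hgood : GoodSH [] MTm.var := by
    intro n B hB
    simp at hB
  have h1 : TSH (.sum A₁ A₂) ((transl t).subst MTm.var MCo.covar) :=
    adeq_sh ht MTm.var MCo.covar hgood
  rw [subst_id_t] at h1
  have h2 : Psh (.conf (transl t) (.covar 0)) := tsh_apply h1 covar0_fsh_sum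
  obtain ⟨u, ⟨u', su, nu⟩, hs | hs⟩ := h2
  · refine ⟨.conf (.injl u') (.covar 0),
      hs.trans (starT_conf _ (starT_injl su)), ?_, u', Or.inl rfl⟩
    rintro ⟨m', hm'⟩
    exact nf_no_step_m hm' ⟨nu, trivial, by simp [Head]⟩
  · refine ⟨.conf (.injr u') (.covar 0),
      hs.trans (starT_conf _ (starT_injr su)), ?_, u', Or.inr rfl⟩
    rintro ⟨m', hm'⟩
    exact nf_no_step_m hm' ⟨nu, trivial, by simp [Head]⟩

/-- Canonicity for sums: for every closed well-typed term ⊢ t : A₁ + A₂, the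
configuration ⟨⟦t⟧ | α⟩ reduces to a normal configuration of the form
⟨inj₁ u | α⟩ or ⟨inj₂ u | α⟩. -/
theorem sum_canonicity {t : LTm} {A₁ A₂ : Ty} (ht : HasTy [] t (.sum A₁ A₂)) :
    ∃ m : MMach, Relation.ReflTransGen StepM (.conf (transl t) (.covar 0)) m ∧
      (¬∃ m', StepM m m') ∧
      ∃ u : MTm, m = .conf (.injl u) (.covar 0) ∨ m = .conf (.injr u) (.covar 0) := by
  exact sum_canonicity' ht
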